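/- For the category Gra of graphs (the presheaf category Set^{⇉}), the category Monad(Gra) does not have all coequalizers: there is a parallel pair of monad morphisms between free monads whose coequalizer does not exist in Monad(Gra). -/

import Mathlib

open CategoryTheory CategoryTheory.Limits

universe v u

/-- The category of graphs as the presheaf-like functor category `Set^⇉`. -/
abbrev Gra := WalkingParallelPair ⥤ Type

/-- `F` is a free monad on the endofunctor `H`: there is a universal arrow
`η : H ⟶ F` such that every natural transformation from `H` into the underlying
functor of a monad `M` extends uniquely to a monad morphism `F ⟶ M`. -/
def IsFreeMonadOn {A : Type u} [Category.{v} A] (H : A ⥤ A) (F : Monad A) : Prop :=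
  ∃ η : H ⟶ F.toFunctor, ∀ (M : Monad A) (f : H ⟶ M.toFunctor),
    ∃! g : F ⟶ M, η ≫ (monadToFunctor A).map g = f

namespace Scratch

open WalkingParallelPair WalkingParallelPairHom

/-- edges -/
abbrev Ed (X : Gra) : Type := X.obj zero
/-- vertices -/
abbrev Vt (X : Gra) : Type := X.obj one
abbrev src (X : Gra) : Ed X → Vt X := X.map left
abbrev tgt (X : Gra) : Ed X → Vt X := X.map right

/-- loops -/
def Lp (X : Gra) : Type := {e : Ed X // src X e = tgt X e}

abbrev gra (E V : Type) (s t : E → V) : Gra := parallelPair (TypeCat.ofHom s) (TypeCat.ofHom t)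

@[simp] lemma gra_ed (E V s t) : Ed (gra E V s t) = E := rfl
@[simp] lemma gra_vt (E V s t) : Vt (gra E V s t) = V := rfl
@[simp] lemma gra_src (E V s t) : src (gra E V s t) = s := rfl
@[simp] lemma gra_tgt (E V s t) : tgt (gra E V s t) = t := rfl

/-- constructor for graph morphisms -/
def mkHom {X Y : Gra} (fe : Ed X → Ed Y) (fv : Vt X → Vt Y)
    (hl : ∀ e, fv (src X e) = src Y (fe e))
    (hr : ∀ e, fv (tgt X e) = tgt Y (fe e)) : X ⟶ Y where
  app j := match j with
    | zero => TypeCat.ofHom fe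
    | one => TypeCat.ofHom fv
  naturality j j' f := by
    change WalkingParallelPairHom j j' at f
    cases f with
    | id => simp
    | left => exact ConcreteCategory.hom_ext _ _ hl
    | right => exact ConcreteCategory.hom_ext _ _ hr

@[simp] lemma mkHom_e {X Y : Gra} (fe fv hl hr) :
    (mkHom (X := X) (Y := Y) fe fv hl hr).app zero = fe := rfl
@[simp] lemma mkHom_v {X Y : Gra} (fe fv hl hr) :
    (mkHom (X := X) (Y := Y) fe fv hl hr).app one = fv := rfl

abbrev ed {X Y : Gra} (f : X ⟶ Y) : Ed X → Ed Y := f.app zero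
abbrev vt {X Y : Gra} (f : X ⟶ Y) : Vt X → Vt Y := f.app one

lemma vt_src {X Y : Gra} (f : X ⟶ Y) (e : Ed X) : vt f (src X e) = src Y (ed f e) :=
  types_congr_hom (f.naturality left) e
lemma vt_tgt {X Y : Gra} (f : X ⟶ Y) (e : Ed X) : vt f (tgt X e) = tgt Y (ed f e) :=
  types_congr_hom (f.naturality right) e

@[ext] lemma ghom_ext {X Y : Gra} {f g : X ⟶ Y}
    (he : ∀ e, ed f e = ed g e) (hv : ∀ x, vt f x = vt g x) : f = g := by
  apply NatTrans.ext
  funext j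
  cases j with
  | zero => exact ConcreteCategory.hom_ext _ _ he
  | one => exact ConcreteCategory.hom_ext _ _ hv

@[simp] lemma ed_comp {X Y Z : Gra} (f : X ⟶ Y) (g : Y ⟶ Z) (e) :
    ed (f ≫ g) e = ed g (ed f e) := rfl
@[simp] lemma vt_comp {X Y Z : Gra} (f : X ⟶ Y) (g : Y ⟶ Z) (x) :
    vt (f ≫ g) x = vt g (vt f x) := rfl
@[simp] lemma ed_id {X : Gra} (e) : ed (𝟙 X) e = e := rfl
@[simp] lemma vt_id {X : Gra} (x) : vt (𝟙 X) x = x := rfl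

/-- loops map -/
def lmap {X Y : Gra} (f : X ⟶ Y) : Lp X → Lp Y :=
  fun l => ⟨ed f l.1, by rw [← vt_src, ← vt_tgt, l.2]⟩

@[simp] lemma lmap_val {X Y : Gra} (f : X ⟶ Y) (l : Lp X) : (lmap f l).1 = ed f l.1 := rfl

@[simp] lemma lmap_id {X : Gra} : lmap (𝟙 X) = _root_.id := by
  funext l; apply Subtype.ext; rfl

@[simp] lemma lmap_comp {X Y Z : Gra} (f : X ⟶ Y) (g : Y ⟶ Z) :
    lmap (f ≫ g) = lmap g ∘ lmap f := by
  funext l; apply Subtype.ext; rfl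

end Scratch

open CategoryTheory CategoryTheory.Limits WalkingParallelPair

namespace Scratch

/-- H X : discrete graph on Set (Lp X) -/
abbrev Hobj (X : Gra) : Gra := gra PEmpty (Set (Lp X)) PEmpty.elim PEmpty.elim

def HF : Gra ⥤ Gra where
  obj := Hobj
  map {X Y} f := mkHom PEmpty.elim (Set.image (lmap f))
    (fun e => e.elim) (fun e => e.elim)
  map_id X := by
    apply ghom_ext
    · intro e; exact e.elim
    · intro U; simp
  map_comp {X Y Z} f g := by
    apply ghom_ext
    · intro e; exact e.elim
    · intro U
      show lmap (f ≫ g) '' U = lmap g '' (lmap f '' U)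
      rw [lmap_comp, Set.image_comp]

/-- K X : arrows indexed by Set (Lp X) -/
abbrev Kobj (X : Gra) : Gra :=
  gra (Set (Lp X)) (Set (Lp X) × Bool) (fun U => (U, false)) (fun U => (U, true))

def KF : Gra ⥤ Gra where
  obj := Kobj
  map {X Y} f := mkHom (Set.image (lmap f)) (Prod.map (Set.image (lmap f)) _root_.id)
    (fun e => rfl) (fun e => rfl)
  map_id X := by
    apply ghom_ext
    · intro U; simp
    · intro ⟨U, b⟩; simp
  map_comp {X Y Z} f g := by
    apply ghom_ext
    · intro U
      show lmap (f ≫ g) '' U = lmap g '' (lmap f '' U)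
      rw [lmap_comp, Set.image_comp]
    · intro ⟨U, b⟩
      show (lmap (f ≫ g) '' U, b) = (lmap g '' (lmap f '' U), b)
      rw [lmap_comp, Set.image_comp]

/-- L X : loops on Set (Lp X) -/
abbrev Lobj (X : Gra) : Gra := gra (Set (Lp X)) (Set (Lp X)) _root_.id _root_.id

def LF : Gra ⥤ Gra where
  obj := Lobj
  map {X Y} f := mkHom (Set.image (lmap f)) (Set.image (lmap f))
    (fun e => rfl) (fun e => rfl)
  map_id X := by
    apply ghom_ext
    · intro U; simp
    · intro U; simp
  map_comp {X Y Z} f g := by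
    apply ghom_ext
    · intro U
      show lmap (f ≫ g) '' U = lmap g '' (lmap f '' U)
      rw [lmap_comp, Set.image_comp]
    · intro U
      show lmap (f ≫ g) '' U = lmap g '' (lmap f '' U)
      rw [lmap_comp, Set.image_comp]

@[simp] lemma LF_map_e {X Y : Gra} (f : X ⟶ Y) (U) :
    ed (LF.map f) U = Set.image (lmap f) U := rfl
@[simp] lemma LF_map_v {X Y : Gra} (f : X ⟶ Y) (U) :
    vt (LF.map f) U = Set.image (lmap f) U := rfl

/-- σ τ : H ⟶ K -/
def sig : HF ⟶ KF where
  app X := mkHom PEmpty.elim (fun U => (U, false)) (fun e => e.elim) (fun e => e.elim)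
  naturality X Y f := by
    apply ghom_ext
    · intro e; exact e.elim
    · intro U; rfl

def tau : HF ⟶ KF where
  app X := mkHom PEmpty.elim (fun U => (U, true)) (fun e => e.elim) (fun e => e.elim)
  naturality X Y f := by
    apply ghom_ext
    · intro e; exact e.elim
    · intro U; rfl

end Scratch

namespace Scratch

open Sum

lemma lp_ext {A B : Gra} {f g : Lp A → Lp B} (h : ∀ l, (f l).1 = (g l).1) : f = g := by
  funext l; exact Subtype.ext (h l)

/-- FH X = X ⊕ H X -/
abbrev FHobj (X : Gra) : Gra :=
  gra (Ed X) (Vt X ⊕ Set (Lp X)) (fun e => inl (src X e)) (fun e => inl (tgt X e))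

/-- loops of FH X are loops of X -/
def eH {X : Gra} : Lp (FHobj X) → Lp X := fun l => ⟨l.1, inl_injective l.2⟩

@[simp] lemma eH_val {X : Gra} (l : Lp (FHobj X)) : (eH l).1 = l.1 := rfl

def FHf : Gra ⥤ Gra where
  obj := FHobj
  map {X Y} f := mkHom (fun e => (ed f e : Ed Y)) (Sum.map (vt f) (Set.image (lmap f)))
    (fun e => by show Sum.inl (vt f (src X e)) = inl (src Y (ed f e)); rw [vt_src])
    (fun e => by show Sum.inl (vt f (tgt X e)) = inl (tgt Y (ed f e)); rw [vt_tgt])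
  map_id X := by
    apply ghom_ext
    · intro e; rfl
    · intro w; cases w with
      | inl v => rfl
      | inr U => show inr (lmap (𝟙 X) '' U) = inr U; rw [lmap_id, Set.image_id]
  map_comp {X Y Z} f g := by
    apply ghom_ext
    · intro e; rfl
    · intro w; cases w with
      | inl v => rfl
      | inr U =>
        show inr (lmap (f ≫ g) '' U) = inr (lmap g '' (lmap f '' U))
        rw [lmap_comp, Set.image_comp]

@[simp] lemma FHf_map_e {X Y : Gra} (f : X ⟶ Y) (e) : ed (FHf.map f) e = ed f e := rfl
@[simp] lemma FHf_map_vl {X Y : Gra} (f : X ⟶ Y) (v) :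
    vt (FHf.map f) (inl v) = inl (vt f v) := rfl
@[simp] lemma FHf_map_vr {X Y : Gra} (f : X ⟶ Y) (U) :
    vt (FHf.map f) (inr U) = inr (lmap f '' U) := rfl

lemma eH_nat {X Y : Gra} (f : X ⟶ Y) :
    eH ∘ lmap (FHf.map f) = lmap f ∘ eH (X := X) := lp_ext (fun l => rfl)

def etaH (X : Gra) : X ⟶ FHobj X := mkHom _root_.id inl (fun e => rfl) (fun e => rfl)

def muH (X : Gra) : FHobj (FHobj X) ⟶ FHobj X :=
  mkHom _root_.id (Sum.elim _root_.id (fun U => inr (eH '' U))) (fun e => rfl) (fun e => rfl)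

lemma eH_muH (X : Gra) : eH ∘ lmap (muH X) = eH ∘ (eH (X := FHobj X)) := lp_ext (fun l => rfl)

lemma eH_etaH (X : Gra) : eH ∘ lmap (etaH X) = _root_.id := lp_ext (fun l => rfl)

def FHmon : CategoryTheory.Monad Gra where
  toFunctor := FHf
  η := { app := etaH
         naturality := fun X Y f => by
           apply ghom_ext
           · intro e; rfl
           · intro v; rfl }
  μ := { app := muH
         naturality := fun X Y f => by
           apply ghom_ext
           · intro e; rfl
           · intro w
             rcases w with (v | U) | U2
             · rfl
             · rfl
             · show inr (eH '' (lmap (FHf.map f) '' U2)) = inr (lmap f '' (eH '' U2))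
               erw [← Set.image_comp, ← Set.image_comp, eH_nat]; rfl }
  assoc := fun X => by
    apply ghom_ext
    · intro e; rfl
    · intro w
      rcases w with ((v | U) | U2) | U3
      · rfl
      · rfl
      · rfl
      · show inr (eH '' (lmap (muH X) '' U3)) = inr (eH '' (eH '' U3))
        erw [← Set.image_comp]
  left_unit := fun X => by
    apply ghom_ext
    · intro e; rfl
    · intro w; rfl
  right_unit := fun X => by
    apply ghom_ext
    · intro e; rfl
    · intro w
      rcases w with v | U
      · rfl
      · show inr (eH '' (lmap (etaH X) '' U)) = inr U
        rw [← Set.image_comp, eH_etaH, Set.image_id]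

end Scratch

namespace Scratch

open Sum

/-- FK X = X ⊕ K X -/
abbrev FKobj (X : Gra) : Gra :=
  gra (Ed X ⊕ Set (Lp X)) (Vt X ⊕ Set (Lp X) × Bool)
    (Sum.elim (fun e => inl (src X e)) (fun U => inr (U, false)))
    (Sum.elim (fun e => inl (tgt X e)) (fun U => inr (U, true)))

/-- loops of FK X are loops of X -/
def eK {X : Gra} : Lp (FKobj X) → Lp X := fun l =>
  match l with
  | ⟨Sum.inl e, h⟩ => ⟨e, inl_injective h⟩
  | ⟨Sum.inr U, h⟩ => absurd (inr_injective h) (by simp)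

lemma eK_val {X : Gra} (l : Lp (FKobj X)) : Sum.inl (eK l).1 = l.1 := by
  obtain ⟨e | U, h⟩ := l
  · rfl
  · exact absurd (inr_injective h) (by simp)

def FKf : Gra ⥤ Gra where
  obj := FKobj
  map {X Y} f := mkHom (Sum.map (fun e => (ed f e : Ed Y)) (Set.image (lmap f)))
    (Sum.map (vt f) (Prod.map (Set.image (lmap f)) _root_.id))
    (fun e => by
      rcases e with e | U
      · show Sum.inl (vt f (src X e)) = inl (src Y (ed f e)); rw [vt_src]
      · rfl)
    (fun e => by
      rcases e with e | U
      · show Sum.inl (vt f (tgt X e)) = inl (tgt Y (ed f e)); rw [vt_tgt]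
      · rfl)
  map_id X := by
    apply ghom_ext
    · intro e; rcases e with e | U
      · rfl
      · show inr (lmap (𝟙 X) '' U) = inr U; rw [lmap_id, Set.image_id]
    · intro w; rcases w with v | ⟨U, b⟩
      · rfl
      · show inr (lmap (𝟙 X) '' U, b) = inr (U, b); rw [lmap_id, Set.image_id]
  map_comp {X Y Z} f g := by
    apply ghom_ext
    · intro e; rcases e with e | U
      · rfl
      · show inr (lmap (f ≫ g) '' U) = inr (lmap g '' (lmap f '' U))
        rw [lmap_comp, Set.image_comp]
    · intro w; rcases w with v | ⟨U, b⟩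
      · rfl
      · show inr (lmap (f ≫ g) '' U, b) = inr (lmap g '' (lmap f '' U), b)
        rw [lmap_comp, Set.image_comp]

lemma eK_nat {X Y : Gra} (f : X ⟶ Y) :
    eK ∘ lmap (FKf.map f) = lmap f ∘ eK (X := X) := by
  apply lp_ext
  intro l
  apply inl_injective
  simp only [Function.comp_apply, id_eq]
  rw [eK_val]
  show ed (FKf.map f) l.1 = Sum.inl (ed f (eK l).1)
  rw [← eK_val (X := X) l]
  rfl

def etaK (X : Gra) : X ⟶ FKobj X :=
  mkHom (fun e => (inl (ed (𝟙 X) e) : Ed (FKobj X))) inl (fun e => rfl) (fun e => rfl)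

lemma eK_etaK (X : Gra) : eK ∘ lmap (etaK X) = _root_.id := by
  apply lp_ext
  intro l
  apply inl_injective
  simp only [Function.comp_apply, id_eq]
  rw [eK_val]
  rfl

def muK (X : Gra) : FKobj (FKobj X) ⟶ FKobj X :=
  mkHom (Sum.elim (fun e => (e : Ed (FKobj X))) (fun U => inr (eK '' U)))
    (Sum.elim _root_.id (fun p => inr (eK '' p.1, p.2)))
    (fun e => by
      rcases e with e | U
      · rfl
      · rfl)
    (fun e => by
      rcases e with e | U
      · rfl
      · rfl)

lemma eK_muK (X : Gra) : eK ∘ lmap (muK X) = eK ∘ (eK (X := FKobj X)) := by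
  apply lp_ext
  intro l
  apply inl_injective
  simp only [Function.comp_apply, id_eq]
  rw [eK_val, eK_val]
  show ed (muK X) l.1 = (eK l).1
  rw [← eK_val (X := FKobj X) l, ← eK_val (X := X) (eK l)]
  rfl

def FKmon : CategoryTheory.Monad Gra where
  toFunctor := FKf
  η := { app := etaK
         naturality := fun X Y f => by
           apply ghom_ext
           · intro e; rfl
           · intro v; rfl }
  μ := { app := muK
         naturality := fun X Y f => by
           apply ghom_ext
           · intro e
             rcases e with (e | U) | U2
             · rfl
             · rfl
             · show inr (eK '' (lmap (FKf.map f) '' U2)) = inr (lmap f '' (eK '' U2))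
               erw [← Set.image_comp, ← Set.image_comp, eK_nat]; rfl
           · intro w
             rcases w with (v | p) | p2
             · rfl
             · rfl
             · show inr (eK '' (lmap (FKf.map f) '' p2.1), p2.2)
                 = inr (lmap f '' (eK '' p2.1), p2.2)
               erw [← Set.image_comp, ← Set.image_comp, eK_nat]; rfl }
  assoc := fun X => by
    apply ghom_ext
    · intro e
      rcases e with ((e | U) | U2) | U3
      · rfl
      · rfl
      · rfl
      · show inr (eK '' (lmap (muK X) '' U3)) = inr (eK '' (eK '' U3))
        erw [← Set.image_comp, ← Set.image_comp, eK_muK]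
    · intro w
      rcases w with ((v | p) | p2) | p3
      · rfl
      · rfl
      · rfl
      · show inr (eK '' (lmap (muK X) '' p3.1), p3.2) = inr (eK '' (eK '' p3.1), p3.2)
        erw [← Set.image_comp, ← Set.image_comp, eK_muK]
  left_unit := fun X => by
    apply ghom_ext
    · intro e; rcases e with e | U
      · rfl
      · rfl
    · intro w; rfl
  right_unit := fun X => by
    apply ghom_ext
    · intro e
      rcases e with e | U
      · rfl
      · show inr (eK '' (lmap (etaK X) '' U)) = inr U
        rw [← Set.image_comp, eK_etaK, Set.image_id]
    · intro w
      rcases w with v | p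
      · rfl
      · show inr (eK '' (lmap (etaK X) '' p.1), p.2) = inr p
        rw [← Set.image_comp, eK_etaK, Set.image_id]
        rfl

end Scratch

namespace Scratch

open Sum CategoryTheory

lemma ed_nat {F G : Gra ⥤ Gra} (α : F ⟶ G) {X Y : Gra} (φ : X ⟶ Y) (e) :
    ed (α.app Y) (ed (F.map φ) e) = ed (G.map φ) (ed (α.app X) e) :=
  types_congr_hom (congrArg (fun h => NatTrans.app h WalkingParallelPair.zero) (α.naturality φ)) e

lemma vt_nat {F G : Gra ⥤ Gra} (α : F ⟶ G) {X Y : Gra} (φ : X ⟶ Y) (v) :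
    vt (α.app Y) (vt (F.map φ) v) = vt (G.map φ) (vt (α.app X) v) :=
  types_congr_hom (congrArg (fun h => NatTrans.app h WalkingParallelPair.one) (α.naturality φ)) v

section
variable (M : CategoryTheory.Monad Gra)

lemma ed_left_unit (X : Gra) (e) :
    ed (M.μ.app X) (ed (M.η.app (M.obj X)) e) = e :=
  types_congr_hom (congrArg (fun h => NatTrans.app h WalkingParallelPair.zero) (M.left_unit X)) e

lemma vt_left_unit (X : Gra) (v) :
    vt (M.μ.app X) (vt (M.η.app (M.obj X)) v) = v :=
  types_congr_hom (congrArg (fun h => NatTrans.app h WalkingParallelPair.one) (M.left_unit X)) v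

lemma ed_right_unit (X : Gra) (e) :
    ed (M.μ.app X) (ed (M.map (M.η.app X)) e) = e :=
  types_congr_hom (congrArg (fun h => NatTrans.app h WalkingParallelPair.zero) (M.right_unit X)) e

lemma vt_right_unit (X : Gra) (v) :
    vt (M.μ.app X) (vt (M.map (M.η.app X)) v) = v :=
  types_congr_hom (congrArg (fun h => NatTrans.app h WalkingParallelPair.one) (M.right_unit X)) v

end

/-- universal map H ⟶ FH -/
def etaHT : HF ⟶ FHf where
  app X := mkHom (fun e => e.elim) inr (fun e => e.elim) (fun e => e.elim)
  naturality X Y f := by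
    apply ghom_ext
    · intro e; exact e.elim
    · intro U; rfl

/-- universal map K ⟶ FK -/
def etaKT : KF ⟶ FKf where
  app X := mkHom (fun U => (inr U : Ed (FKobj X))) inr
    (fun e => rfl) (fun e => rfl)
  naturality X Y f := by
    apply ghom_ext
    · intro U; rfl
    · intro p; rfl

section
variable (M : CategoryTheory.Monad Gra)

/-- fold for FH -/
def gHnat (f : HF ⟶ M.toFunctor) : FHf ⟶ M.toFunctor where
  app X := mkHom (fun e => (ed (M.η.app X) e : Ed (M.obj X)))
    (Sum.elim (fun v => vt (M.η.app X) v) (fun U => vt (f.app X) U))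
    (fun e => vt_src (M.η.app X) e)
    (fun e => vt_tgt (M.η.app X) e)
  naturality X Y φ := by
    apply ghom_ext
    · intro e; exact ed_nat M.η φ e
    · intro w
      rcases w with v | U
      · exact vt_nat M.η φ v
      · exact vt_nat f φ U

lemma lmap_gH (f : HF ⟶ M.toFunctor) (X : Gra) :
    lmap ((gHnat M f).app X) = lmap (M.η.app X) ∘ eH := lp_ext (fun l => rfl)

def gH (f : HF ⟶ M.toFunctor) : FHmon ⟶ M where
  toNatTrans := gHnat M f
  app_η X := by
    apply ghom_ext
    · intro e; rfl
    · intro v; rfl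
  app_μ X := by
    apply ghom_ext
    · intro e
      show ed ((gHnat M f).app X) e = ed (M.μ.app X)
        (ed ((gHnat M f).app (M.obj X)) (ed (FHf.map ((gHnat M f).app X)) e))
      exact (ed_left_unit M X _).symm
    · intro w
      rcases w with (v | U) | U2
      · exact (vt_left_unit M X _).symm
      · exact (vt_left_unit M X _).symm
      · show vt (f.app X) (eH '' U2) = vt (M.μ.app X)
          (vt ((gHnat M f).app (M.obj X)) (vt (FHf.map ((gHnat M f).app X)) (inr U2)))
        have h1 : vt (FHf.map ((gHnat M f).app X)) (inr U2)
            = inr (lmap (M.η.app X) '' (eH '' U2)) := by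
          show inr (lmap ((gHnat M f).app X) '' U2) = _
          erw [lmap_gH, Set.image_comp]; rfl
        rw [h1]
        show vt (f.app X) (eH '' U2) = vt (M.μ.app X)
          (vt (f.app (M.obj X)) (vt (HF.map (M.η.app X)) (eH '' U2)))
        erw [vt_nat f (M.η.app X), vt_right_unit]; rfl

lemma freeH : IsFreeMonadOn HF FHmon := by
  refine ⟨etaHT, fun M f => ⟨gH M f, ?_, ?_⟩⟩
  · apply NatTrans.ext
    funext X
    apply ghom_ext
    · intro e; exact e.elim
    · intro U; rfl
  · intro g' hg'
    apply MonadHom.ext'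
    funext X
    apply ghom_ext
    · intro e
      have := types_congr_hom (congrArg (fun h => NatTrans.app h WalkingParallelPair.zero)
        (g'.app_η X)) e
      exact this
    · intro w
      rcases w with v | U
      · exact types_congr_hom (congrArg (fun h => NatTrans.app h WalkingParallelPair.one)
          (g'.app_η X)) v
      · have := types_congr_hom (congrArg (fun (h : HF ⟶ M.toFunctor) => (h.app X).app WalkingParallelPair.one)
          hg') U
        exact this

/-- fold for FK -/
def gKnat (f : KF ⟶ M.toFunctor) : FKf ⟶ M.toFunctor where
  app X := mkHom (Sum.elim (fun e => (ed (M.η.app X) e : Ed (M.obj X))) (fun U => ed (f.app X) U))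
    (Sum.elim (fun v => vt (M.η.app X) v) (fun p => vt (f.app X) p))
    (fun e => by
      rcases e with e | U
      · exact vt_src (M.η.app X) e
      · exact vt_src (f.app X) U)
    (fun e => by
      rcases e with e | U
      · exact vt_tgt (M.η.app X) e
      · exact vt_tgt (f.app X) U)
  naturality X Y φ := by
    apply ghom_ext
    · intro e
      rcases e with e | U
      · exact ed_nat M.η φ e
      · exact ed_nat f φ U
    · intro w
      rcases w with v | p
      · exact vt_nat M.η φ v
      · exact vt_nat f φ p

lemma lmap_gK (f : KF ⟶ M.toFunctor) (X : Gra) :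
    lmap ((gKnat M f).app X) = lmap (M.η.app X) ∘ eK := by
  apply lp_ext
  intro l
  show ed ((gKnat M f).app X) l.1 = ed (M.η.app X) (eK l).1
  rw [← eK_val (X := X) l]
  rfl

def gK (f : KF ⟶ M.toFunctor) : FKmon ⟶ M where
  toNatTrans := gKnat M f
  app_η X := by
    apply ghom_ext
    · intro e; rfl
    · intro v; rfl
  app_μ X := by
    apply ghom_ext
    · intro e
      rcases e with (e | U) | U2
      · exact (ed_left_unit M X _).symm
      · exact (ed_left_unit M X _).symm
      · show ed (f.app X) (eK '' U2) = ed (M.μ.app X)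
          (ed ((gKnat M f).app (M.obj X)) (ed (FKf.map ((gKnat M f).app X)) (inr U2)))
        have h1 : ed (FKf.map ((gKnat M f).app X)) (inr U2)
            = inr (lmap (M.η.app X) '' (eK '' U2)) := by
          show inr (lmap ((gKnat M f).app X) '' U2) = _
          erw [lmap_gK, Set.image_comp]; rfl
        rw [h1]
        show ed (f.app X) (eK '' U2) = ed (M.μ.app X)
          (ed (f.app (M.obj X)) (ed (KF.map (M.η.app X)) (eK '' U2)))
        erw [ed_nat f (M.η.app X), ed_right_unit]; rfl
    · intro w
      rcases w with (v | p) | p2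
      · exact (vt_left_unit M X _).symm
      · exact (vt_left_unit M X _).symm
      · show vt (f.app X) (eK '' p2.1, p2.2) = vt (M.μ.app X)
          (vt ((gKnat M f).app (M.obj X)) (vt (FKf.map ((gKnat M f).app X)) (inr p2)))
        have h1 : vt (FKf.map ((gKnat M f).app X)) (inr p2)
            = inr (lmap (M.η.app X) '' (eK '' p2.1), p2.2) := by
          show inr (lmap ((gKnat M f).app X) '' p2.1, p2.2) = _
          erw [lmap_gK, Set.image_comp]; rfl
        rw [h1]
        show vt (f.app X) (eK '' p2.1, p2.2) = vt (M.μ.app X)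
          (vt (f.app (M.obj X)) (vt (KF.map (M.η.app X)) (eK '' p2.1, p2.2)))
        erw [vt_nat f (M.η.app X), vt_right_unit]; rfl

lemma gK_etaKT (f : KF ⟶ M.toFunctor) :
    etaKT ≫ (gKnat M f) = f := by
  apply NatTrans.ext
  funext X
  apply ghom_ext
  · intro U; rfl
  · intro p; rfl

lemma gK_unique (f : KF ⟶ M.toFunctor) (g' : FKmon ⟶ M)
    (hg' : etaKT ≫ g'.toNatTrans = f) : g' = gK M f := by
  apply MonadHom.ext'
  funext X
  apply ghom_ext
  · intro e
    rcases e with e | U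
    · exact types_congr_hom (congrArg (fun h => NatTrans.app h WalkingParallelPair.zero)
        (g'.app_η X)) e
    · exact types_congr_hom (congrArg (fun (h : KF ⟶ M.toFunctor) => (h.app X).app WalkingParallelPair.zero)
        hg') U
  · intro w
    rcases w with v | p
    · exact types_congr_hom (congrArg (fun h => NatTrans.app h WalkingParallelPair.one)
        (g'.app_η X)) v
    · exact types_congr_hom (congrArg (fun (h : KF ⟶ M.toFunctor) => (h.app X).app WalkingParallelPair.one)
        hg') p

lemma freeK : IsFreeMonadOn KF FKmon :=
  ⟨etaKT, fun M f => ⟨gK M f, gK_etaKT M f, fun g' hg' => gK_unique M f g' hg'⟩⟩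

end

end Scratch

namespace Scratch

open Sum CategoryTheory CategoryTheory.Limits

/-- component of the monad morphisms FH ⟶ FK -/
def pqApp (b : Bool) (X : Gra) : FHobj X ⟶ FKobj X :=
  mkHom (fun (e : Ed (FHobj X)) => (inl e : Ed (FKobj X)))
    ((Sum.map _root_.id (fun U => (U, b))) : Vt (FHobj X) → Vt (FKobj X))
    (fun e => rfl) (fun e => rfl)

lemma eK_pqApp (b : Bool) (X : Gra) : eK ∘ lmap (pqApp b X) = eH (X := X) := by
  apply lp_ext
  intro l
  apply inl_injective
  simp only [Function.comp_apply]
  rw [eK_val]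
  rfl

/-- the two monad morphisms FH ⟶ FK -/
def pq (b : Bool) : FHmon ⟶ FKmon where
  toNatTrans :=
    { app := pqApp b
      naturality := fun X Y f => by
        apply ghom_ext
        · intro e; rfl
        · intro w; rcases w with v | U
          · rfl
          · rfl }
  app_η X := by
    apply ghom_ext
    · intro e; rfl
    · intro v; rfl
  app_μ X := by
    apply ghom_ext
    · intro e; rfl
    · intro w
      rcases w with (v | U) | U2
      · rfl
      · rfl
      · show inr ((eH '' U2 : Set (Lp X)), b)
          = inr (eK '' (lmap (pqApp b X) '' U2), b)
        erw [← Set.image_comp, eK_pqApp]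

lemma FH_hom_ext {M : CategoryTheory.Monad Gra} (g1 g2 : FHmon ⟶ M)
    (h : etaHT ≫ g1.toNatTrans = etaHT ≫ g2.toNatTrans) : g1 = g2 := by
  apply MonadHom.ext'
  funext X
  apply ghom_ext
  · intro e
    have h1 := types_congr_hom (congrArg (fun h => NatTrans.app h WalkingParallelPair.zero)
      (g1.app_η X)) e
    have h2 := types_congr_hom (congrArg (fun h => NatTrans.app h WalkingParallelPair.zero)
      (g2.app_η X)) e
    exact h1.trans h2.symm
  · intro w
    rcases w with v | U
    · have h1 := types_congr_hom (congrArg (fun h => NatTrans.app h WalkingParallelPair.one)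
        (g1.app_η X)) v
      have h2 := types_congr_hom (congrArg (fun h => NatTrans.app h WalkingParallelPair.one)
        (g2.app_η X)) v
      exact h1.trans h2.symm
    · exact types_congr_hom (congrArg
        (fun (k : HF ⟶ M.toFunctor) => (k.app X).app WalkingParallelPair.one) h) U

lemma FK_hom_ext {M : CategoryTheory.Monad Gra} (g1 g2 : FKmon ⟶ M)
    (h : etaKT ≫ g1.toNatTrans = etaKT ≫ g2.toNatTrans) : g1 = g2 := by
  apply MonadHom.ext'
  funext X
  apply ghom_ext
  · intro e
    rcases e with e | U
    · have h1 := types_congr_hom (congrArg (fun h => NatTrans.app h WalkingParallelPair.zero)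
        (g1.app_η X)) e
      have h2 := types_congr_hom (congrArg (fun h => NatTrans.app h WalkingParallelPair.zero)
        (g2.app_η X)) e
      exact h1.trans h2.symm
    · exact types_congr_hom (congrArg
        (fun (k : KF ⟶ M.toFunctor) => (k.app X).app WalkingParallelPair.zero) h) U
  · intro w
    rcases w with v | p
    · have h1 := types_congr_hom (congrArg (fun h => NatTrans.app h WalkingParallelPair.one)
        (g1.app_η X)) v
      have h2 := types_congr_hom (congrArg (fun h => NatTrans.app h WalkingParallelPair.one)
        (g2.app_η X)) v
      exact h1.trans h2.symm
    · exact types_congr_hom (congrArg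
        (fun (k : KF ⟶ M.toFunctor) => (k.app X).app WalkingParallelPair.one) h) p

section
variable [hc : HasColimit (parallelPair (pq false) (pq true))]

noncomputable def Qmon : CategoryTheory.Monad Gra := colimit (parallelPair (pq false) (pq true))

noncomputable def cmor : FKmon ⟶ Qmon :=
  colimit.ι (parallelPair (pq false) (pq true)) WalkingParallelPair.one

lemma c_coeq : pq false ≫ cmor = pq true ≫ cmor := by
  have h1 := colimit.w (parallelPair (pq false) (pq true)) WalkingParallelPairHom.left
  have h2 := colimit.w (parallelPair (pq false) (pq true)) WalkingParallelPairHom.right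
  exact h1.trans h2.symm

lemma c_coeq_app (X : Gra) (U : Set (Lp X)) :
    vt (cmor.app X) (inr (U, false)) = vt (cmor.app X) (inr (U, true)) := by
  have h := types_congr_hom (congrArg
    (fun (k : FHmon ⟶ Qmon) => (k.app X).app WalkingParallelPair.one) c_coeq) (inr U)
  exact h

noncomputable def lamQ : LF ⟶ Qmon.toFunctor where
  app X := mkHom (fun U => ed (cmor.app X) (inr U))
    (fun U => vt (cmor.app X) (inr (U, false)))
    (fun U => vt_src (cmor.app X) (inr U))
    (fun U => by
      have := vt_tgt (cmor.app X) (inr U)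
      rw [← this]
      exact c_coeq_app X U)
  naturality X Y φ := by
    apply ghom_ext
    · intro U
      show ed (cmor.app Y) (inr (lmap φ '' U)) = ed (Qmon.map φ) (ed (cmor.app X) (inr U))
      have := ed_nat cmor.toNatTrans φ (inr U : Ed (FKobj X))
      exact this
    · intro U
      show vt (cmor.app Y) (inr (lmap φ '' U, false))
        = vt (Qmon.map φ) (vt (cmor.app X) (inr (U, false)))
      have := vt_nat cmor.toNatTrans φ (inr (U, false) : Vt (FKobj X))
      exact this

/-- restriction of f : L ⟶ M along the quotient K ⟶ L -/
def resK {M : CategoryTheory.Monad Gra} (f : LF ⟶ M.toFunctor) : KF ⟶ M.toFunctor where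
  app X := mkHom (fun U => (ed (f.app X) U : Ed (M.obj X)))
    (fun p => vt (f.app X) p.1)
    (fun U => vt_src (f.app X) U)
    (fun U => vt_tgt (f.app X) U)
  naturality X Y φ := by
    apply ghom_ext
    · intro U
      exact types_congr_hom (congrArg (fun h => NatTrans.app h WalkingParallelPair.zero)
        (f.naturality φ)) U
    · intro p
      exact types_congr_hom (congrArg (fun h => NatTrans.app h WalkingParallelPair.one)
        (f.naturality φ)) p.1

lemma Q_free : IsFreeMonadOn LF Qmon := by
  refine ⟨lamQ, fun M f => ?_⟩
  set fK := resK f with hfK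
  have hcoeq : pq false ≫ gK M fK = pq true ≫ gK M fK := by
    apply FH_hom_ext
    apply NatTrans.ext
    funext X
    apply ghom_ext
    · intro e; exact e.elim
    · intro U; rfl
  refine ⟨colimit.desc _ (Cofork.ofπ (gK M fK) hcoeq), ?_, ?_⟩
  · have hg : cmor ≫ colimit.desc _ (Cofork.ofπ (gK M fK) hcoeq) = gK M fK :=
      colimit.ι_desc (Cofork.ofπ (gK M fK) hcoeq) WalkingParallelPair.one
    apply NatTrans.ext
    funext X
    apply ghom_ext
    · intro U
      have := types_congr_hom (congrArg
        (fun (k : FKmon ⟶ M) => (k.app X).app WalkingParallelPair.zero) hg)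
        (inr U : Ed (FKobj X))
      exact this
    · intro U
      have := types_congr_hom (congrArg
        (fun (k : FKmon ⟶ M) => (k.app X).app WalkingParallelPair.one) hg)
        (inr (U, false) : Vt (FKobj X))
      exact this
  · intro g' hg'
    have hc' : cmor ≫ g' = gK M fK := by
      apply FK_hom_ext
      apply NatTrans.ext
      funext X
      apply ghom_ext
      · intro U
        have := types_congr_hom (congrArg
          (fun (k : LF ⟶ M.toFunctor) => (k.app X).app WalkingParallelPair.zero) hg') U
        exact this
      · intro p
        obtain ⟨U, b⟩ := p
        have h0 := types_congr_hom (congrArg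
          (fun (k : LF ⟶ M.toFunctor) => (k.app X).app WalkingParallelPair.one) hg') U
        cases b
        · exact h0
        · show vt (g'.app X) (vt (cmor.app X) (inr (U, true))) = vt (fK.app X) (U, true)
          rw [← c_coeq_app X U]
          exact h0
    apply colimit.hom_ext
    intro j
    cases j
    · rw [← colimit.w (parallelPair (pq false) (pq true)) WalkingParallelPairHom.left]
      change (pq false) ≫ cmor ≫ _ = (pq false) ≫ cmor ≫ _
      rw [show cmor ≫ colimit.desc _ (Cofork.ofπ (gK M fK) hcoeq) = gK M fK from
        colimit.ι_desc (Cofork.ofπ (gK M fK) hcoeq) WalkingParallelPair.one, hc']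
    · change cmor ≫ _ = cmor ≫ _
      rw [show cmor ≫ colimit.desc _ (Cofork.ofπ (gK M fK) hcoeq) = gK M fK from
        colimit.ι_desc (Cofork.ofπ (gK M fK) hcoeq) WalkingParallelPair.one, hc']

end

end Scratch

namespace Scratch

open CategoryTheory

/-- the empty graph -/
abbrev emptyG : Gra := gra PEmpty PEmpty PEmpty.elim PEmpty.elim

def toE (X : Gra) : emptyG ⟶ X := mkHom (fun e => e.elim) (fun v => v.elim)
  (fun e => e.elim) (fun e => e.elim)

lemma toE_unique {X : Gra} (f g : emptyG ⟶ X) : f = g := by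
  apply ghom_ext
  · intro e; exact e.elim
  · intro v; exact v.elim

section Power
variable (X : Gra)

/-- power graph X^(A ⟶ X) -/
abbrev Tobj (A : Gra) : Gra :=
  gra ((A ⟶ X) → Ed X) ((A ⟶ X) → Vt X)
    (fun u k => src X (u k)) (fun u k => tgt X (u k))

/-- evaluation at k -/
def evT {A : Gra} (k : A ⟶ X) : Tobj X A ⟶ X :=
  mkHom (fun u => u k) (fun w => w k) (fun u => rfl) (fun u => rfl)

def TXf : Gra ⥤ Gra where
  obj := Tobj X
  map {A B} φ := mkHom (fun (u : Ed (Tobj X A)) (k : B ⟶ X) => u (φ ≫ k))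
    (fun (w : Vt (Tobj X A)) k => w (φ ≫ k))
    (fun u => rfl) (fun u => rfl)
  map_id A := by
    apply ghom_ext
    · intro u; funext k; show u (𝟙 A ≫ k) = u k; rw [Category.id_comp]
    · intro w; funext k; show w (𝟙 A ≫ k) = w k; rw [Category.id_comp]
  map_comp {A B C} φ ψ := by
    apply ghom_ext
    · intro u; funext k; show u ((φ ≫ ψ) ≫ k) = u (φ ≫ ψ ≫ k); rw [Category.assoc]
    · intro w; funext k; show w ((φ ≫ ψ) ≫ k) = w (φ ≫ ψ ≫ k); rw [Category.assoc]

lemma evT_map {A B : Gra} (φ : A ⟶ B) (k : B ⟶ X) :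
    (TXf X).map φ ≫ evT X k = evT X (φ ≫ k) := by
  apply ghom_ext
  · intro u; rfl
  · intro w; rfl

def TXeta (A : Gra) : A ⟶ Tobj X A :=
  mkHom (fun e k => ed k e) (fun v k => vt k v)
    (fun e => funext (fun k => vt_src k e)) (fun e => funext (fun k => vt_tgt k e))

lemma eta_evT {A : Gra} (k : A ⟶ X) : TXeta X A ≫ evT X k = k := by
  apply ghom_ext
  · intro e; rfl
  · intro v; rfl

def TXmu (A : Gra) : Tobj X (Tobj X A) ⟶ Tobj X A :=
  mkHom (fun u k => u (evT X k)) (fun w k => w (evT X k))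
    (fun u => rfl) (fun u => rfl)

lemma mu_evT {A : Gra} (k : A ⟶ X) :
    TXmu X A ≫ evT X k = evT X (evT X k) := by
  apply ghom_ext
  · intro u; rfl
  · intro w; rfl

def TXmon : CategoryTheory.Monad Gra where
  toFunctor := TXf X
  η := { app := TXeta X
         naturality := fun A B φ => by
           apply ghom_ext
           · intro e; rfl
           · intro v; rfl }
  μ := { app := TXmu X
         naturality := fun A B φ => by
           apply ghom_ext
           · intro u; funext k
             exact congrArg u (evT_map X φ k)
           · intro w; funext k
             exact congrArg w (evT_map X φ k) }
  assoc := fun A => by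
    apply ghom_ext
    · intro u; funext k
      exact congrArg u (mu_evT X k)
    · intro w; funext k
      exact congrArg w (mu_evT X k)
  left_unit := fun A => by
    apply ghom_ext
    · intro u; rfl
    · intro w; rfl
  right_unit := fun A => by
    apply ghom_ext
    · intro u; funext k
      exact congrArg u (eta_evT X k)
    · intro w; funext k
      exact congrArg w (eta_evT X k)

/-- the natural transformation L ⟶ T_X induced by an L-algebra a : L X ⟶ X -/
def fT (a : Lobj X ⟶ X) : LF ⟶ (TXmon X).toFunctor where
  app A := mkHom (fun (U : Ed (Lobj A)) (k : A ⟶ X) => ed a (lmap k '' U))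
    (fun (U : Vt (Lobj A)) (k : A ⟶ X) => vt a (lmap k '' U))
    (fun U => funext (fun k => vt_src a (lmap k '' U)))
    (fun U => funext (fun k => vt_tgt a (lmap k '' U)))
  naturality A B φ := by
    apply ghom_ext
    · intro U; funext k
      show ed a (lmap k '' (lmap φ '' U)) = ed a (lmap (φ ≫ k) '' U)
      erw [lmap_comp, Set.image_comp]
    · intro U; funext k
      show vt a (lmap k '' (lmap φ '' U)) = vt a (lmap (φ ≫ k) '' U)
      erw [lmap_comp, Set.image_comp]

end Power

end Scratch

namespace Scratch

open CategoryTheory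

section Comma
variable {X Y : Gra} (h : X ⟶ Y)

def ThE (A : Gra) : Type :=
  {p : ((A ⟶ X) → Ed X) × ((A ⟶ Y) → Ed Y) // ∀ k : A ⟶ X, ed h (p.1 k) = p.2 (k ≫ h)}

def ThV (A : Gra) : Type :=
  {p : ((A ⟶ X) → Vt X) × ((A ⟶ Y) → Vt Y) // ∀ k : A ⟶ X, vt h (p.1 k) = p.2 (k ≫ h)}

abbrev Thobj (A : Gra) : Gra :=
  gra (ThE h A) (ThV h A)
    (fun p => ⟨(fun k => src X (p.1.1 k), fun k => src Y (p.1.2 k)),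
      fun k => by
        show vt h (src X (p.1.1 k)) = src Y (p.1.2 (k ≫ h))
        rw [vt_src h]; exact congrArg (src Y) (p.2 k)⟩)
    (fun p => ⟨(fun k => tgt X (p.1.1 k), fun k => tgt Y (p.1.2 k)),
      fun k => by
        show vt h (tgt X (p.1.1 k)) = tgt Y (p.1.2 (k ≫ h))
        rw [vt_tgt h]; exact congrArg (tgt Y) (p.2 k)⟩)

def evX {A : Gra} (k : A ⟶ X) : Thobj h A ⟶ X :=
  mkHom (fun p => p.1.1 k) (fun p => p.1.1 k) (fun p => rfl) (fun p => rfl)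

def evY {A : Gra} (k : A ⟶ Y) : Thobj h A ⟶ Y :=
  mkHom (fun p => p.1.2 k) (fun p => p.1.2 k) (fun p => rfl) (fun p => rfl)

lemma evX_h {A : Gra} (k : A ⟶ X) : evX h k ≫ h = evY h (k ≫ h) := by
  apply ghom_ext
  · intro p; exact p.2 k
  · intro p; exact p.2 k

def Thf : Gra ⥤ Gra where
  obj := Thobj h
  map {A B} φ := mkHom
    (fun (p : Ed (Thobj h A)) => (⟨(fun k => p.1.1 (φ ≫ k), fun k => p.1.2 (φ ≫ k)),
      fun k => by rw [p.2 (φ ≫ k), Category.assoc]⟩ : ThE h B))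
    (fun (p : Vt (Thobj h A)) => (⟨(fun k => p.1.1 (φ ≫ k), fun k => p.1.2 (φ ≫ k)),
      fun k => by rw [p.2 (φ ≫ k), Category.assoc]⟩ : ThV h B))
    (fun p => rfl) (fun p => rfl)
  map_id A := by
    apply ghom_ext
    · intro p
      apply Subtype.ext
      show (fun k => p.1.1 (𝟙 A ≫ k), fun k => p.1.2 (𝟙 A ≫ k)) = p.1
      simp [Category.id_comp]
    · intro p
      apply Subtype.ext
      show (fun k => p.1.1 (𝟙 A ≫ k), fun k => p.1.2 (𝟙 A ≫ k)) = p.1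
      simp [Category.id_comp]
  map_comp {A B C} φ ψ := by
    apply ghom_ext
    · intro p
      apply Subtype.ext
      show (fun k => p.1.1 ((φ ≫ ψ) ≫ k), fun k => p.1.2 ((φ ≫ ψ) ≫ k))
        = (fun k => p.1.1 (φ ≫ ψ ≫ k), fun k => p.1.2 (φ ≫ ψ ≫ k))
      simp [Category.assoc]
    · intro p
      apply Subtype.ext
      show (fun k => p.1.1 ((φ ≫ ψ) ≫ k), fun k => p.1.2 ((φ ≫ ψ) ≫ k))
        = (fun k => p.1.1 (φ ≫ ψ ≫ k), fun k => p.1.2 (φ ≫ ψ ≫ k))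
      simp [Category.assoc]

lemma evX_map {A B : Gra} (φ : A ⟶ B) (k : B ⟶ X) :
    (Thf h).map φ ≫ evX h k = evX h (φ ≫ k) := by
  apply ghom_ext
  · intro p; rfl
  · intro p; rfl

lemma evY_map {A B : Gra} (φ : A ⟶ B) (k : B ⟶ Y) :
    (Thf h).map φ ≫ evY h k = evY h (φ ≫ k) := by
  apply ghom_ext
  · intro p; rfl
  · intro p; rfl

def Theta (A : Gra) : A ⟶ Thobj h A :=
  mkHom (fun e => ⟨(fun k => ed k e, fun k => ed k e), fun k => rfl⟩)
    (fun v => ⟨(fun k => vt k v, fun k => vt k v), fun k => rfl⟩)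
    (fun e => Subtype.ext (by
      show ((fun k => vt k (src A e), fun k => vt k (src A e)) : _ × _)
        = (fun k => src X (ed k e), fun k => src Y (ed k e))
      exact Prod.ext (funext fun k => vt_src k e) (funext fun k => vt_src k e)))
    (fun e => Subtype.ext (by
      show ((fun k => vt k (tgt A e), fun k => vt k (tgt A e)) : _ × _)
        = (fun k => tgt X (ed k e), fun k => tgt Y (ed k e))
      exact Prod.ext (funext fun k => vt_tgt k e) (funext fun k => vt_tgt k e)))

lemma eta_evX {A : Gra} (k : A ⟶ X) : Theta h A ≫ evX h k = k := by
  apply ghom_ext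
  · intro e; rfl
  · intro v; rfl

lemma eta_evY {A : Gra} (k : A ⟶ Y) : Theta h A ≫ evY h k = k := by
  apply ghom_ext
  · intro e; rfl
  · intro v; rfl

def Thmu (A : Gra) : Thobj h (Thobj h A) ⟶ Thobj h A :=
  mkHom
    (fun u => ⟨(fun k => u.1.1 (evX h k), fun k => u.1.2 (evY h k)),
      fun k => by rw [u.2 (evX h k), evX_h]⟩)
    (fun u => ⟨(fun k => u.1.1 (evX h k), fun k => u.1.2 (evY h k)),
      fun k => by rw [u.2 (evX h k), evX_h]⟩)
    (fun u => rfl) (fun u => rfl)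

lemma mu_evX {A : Gra} (k : A ⟶ X) :
    Thmu h A ≫ evX h k = evX h (evX h k) := by
  apply ghom_ext
  · intro u; rfl
  · intro u; rfl

lemma mu_evY {A : Gra} (k : A ⟶ Y) :
    Thmu h A ≫ evY h k = evY h (evY h k) := by
  apply ghom_ext
  · intro u; rfl
  · intro u; rfl

def Thmon : CategoryTheory.Monad Gra where
  toFunctor := Thf h
  η := { app := Theta h
         naturality := fun A B φ => by
           apply ghom_ext
           · intro e; rfl
           · intro v; rfl }
  μ := { app := Thmu h
         naturality := fun A B φ => by
           apply ghom_ext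
           · intro u
             apply Subtype.ext
             exact Prod.ext (funext fun k => congrArg u.1.1 (evX_map h φ k))
               (funext fun k => congrArg u.1.2 (evY_map h φ k))
           · intro u
             apply Subtype.ext
             exact Prod.ext (funext fun k => congrArg u.1.1 (evX_map h φ k))
               (funext fun k => congrArg u.1.2 (evY_map h φ k)) }
  assoc := fun A => by
    apply ghom_ext
    · intro u
      apply Subtype.ext
      exact Prod.ext (funext fun k => congrArg u.1.1 (mu_evX h k))
        (funext fun k => congrArg u.1.2 (mu_evY h k))
    · intro u
      apply Subtype.ext
      exact Prod.ext (funext fun k => congrArg u.1.1 (mu_evX h k))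
        (funext fun k => congrArg u.1.2 (mu_evY h k))
  left_unit := fun A => by
    apply ghom_ext
    · intro u; apply Subtype.ext; rfl
    · intro u; apply Subtype.ext; rfl
  right_unit := fun A => by
    apply ghom_ext
    · intro u
      apply Subtype.ext
      exact Prod.ext (funext fun k => congrArg u.1.1 (eta_evX h k))
        (funext fun k => congrArg u.1.2 (eta_evY h k))
    · intro u
      apply Subtype.ext
      exact Prod.ext (funext fun k => congrArg u.1.1 (eta_evX h k))
        (funext fun k => congrArg u.1.2 (eta_evY h k))

/-- projections -/
def prXapp (A : Gra) : Thobj h A ⟶ Tobj X A :=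
  mkHom (fun p => p.1.1) (fun p => p.1.1) (fun p => rfl) (fun p => rfl)

def prYapp (A : Gra) : Thobj h A ⟶ Tobj Y A :=
  mkHom (fun p => p.1.2) (fun p => p.1.2) (fun p => rfl) (fun p => rfl)

lemma prX_evT {A : Gra} (k : A ⟶ X) : prXapp h A ≫ evT X k = evX h k := by
  apply ghom_ext
  · intro p; rfl
  · intro p; rfl

lemma prY_evT {A : Gra} (k : A ⟶ Y) : prYapp h A ≫ evT Y k = evY h k := by
  apply ghom_ext
  · intro p; rfl
  · intro p; rfl

def prX : Thmon h ⟶ TXmon X where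
  toNatTrans :=
    { app := prXapp h
      naturality := fun A B φ => by
        apply ghom_ext
        · intro p; rfl
        · intro p; rfl }
  app_η A := by
    apply ghom_ext
    · intro e; rfl
    · intro v; rfl
  app_μ A := by
    apply ghom_ext
    · intro u; funext k
      exact congrArg u.1.1 (prX_evT h k).symm
    · intro u; funext k
      exact congrArg u.1.1 (prX_evT h k).symm

def prY : Thmon h ⟶ TXmon Y where
  toNatTrans :=
    { app := prYapp h
      naturality := fun A B φ => by
        apply ghom_ext
        · intro p; rfl
        · intro p; rfl }
  app_η A := by
    apply ghom_ext
    · intro e; rfl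
    · intro v; rfl
  app_μ A := by
    apply ghom_ext
    · intro u; funext k
      exact congrArg u.1.2 (prY_evT h k).symm
    · intro u; funext k
      exact congrArg u.1.2 (prY_evT h k).symm

/-- nat trans L ⟶ T_h induced by an algebra morphism square -/
def fTh (a : Lobj X ⟶ X) (b : Lobj Y ⟶ Y) (hab : a ≫ h = LF.map h ≫ b) :
    LF ⟶ (Thmon h).toFunctor where
  app A := mkHom
    (fun (U : Ed (Lobj A)) => (⟨(fun k => ed a (lmap k '' U), fun k => ed b (lmap k '' U)),
      fun k => by
        have h1 := types_congr_hom (congrArg (fun m => NatTrans.app m WalkingParallelPair.zero) hab)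
          (lmap k '' U)
        show ed h (ed a (lmap k '' U)) = ed b (lmap (k ≫ h) '' U)
        rw [lmap_comp, Set.image_comp]
        exact h1⟩ : ThE h A))
    (fun (U : Vt (Lobj A)) => (⟨(fun k => vt a (lmap k '' U), fun k => vt b (lmap k '' U)),
      fun k => by
        have h1 := types_congr_hom (congrArg (fun m => NatTrans.app m WalkingParallelPair.one) hab)
          (lmap k '' U)
        show vt h (vt a (lmap k '' U)) = vt b (lmap (k ≫ h) '' U)
        rw [lmap_comp, Set.image_comp]
        exact h1⟩ : ThV h A))
    (fun U => Subtype.ext (Prod.ext (funext fun k => vt_src a (lmap k '' U))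
      (funext fun k => vt_src b (lmap k '' U))))
    (fun U => Subtype.ext (Prod.ext (funext fun k => vt_tgt a (lmap k '' U))
      (funext fun k => vt_tgt b (lmap k '' U))))
  naturality A B φ := by
    apply ghom_ext
    · intro U
      apply Subtype.ext
      apply Prod.ext
      · funext k
        show ed a (lmap k '' (lmap φ '' U)) = ed a (lmap (φ ≫ k) '' U)
        erw [lmap_comp, Set.image_comp]
      · funext k
        show ed b (lmap k '' (lmap φ '' U)) = ed b (lmap (φ ≫ k) '' U)
        erw [lmap_comp, Set.image_comp]
    · intro U
      apply Subtype.ext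
      apply Prod.ext
      · funext k
        show vt a (lmap k '' (lmap φ '' U)) = vt a (lmap (φ ≫ k) '' U)
        erw [lmap_comp, Set.image_comp]
      · funext k
        show vt b (lmap k '' (lmap φ '' U)) = vt b (lmap (φ ≫ k) '' U)
        erw [lmap_comp, Set.image_comp]

lemma fTh_prX (a : Lobj X ⟶ X) (b : Lobj Y ⟶ Y) (hab : a ≫ h = LF.map h ≫ b) :
    fTh h a b hab ≫ (prX h).toNatTrans = fT X a := by
  apply NatTrans.ext
  funext A
  apply ghom_ext
  · intro U; rfl
  · intro U; rfl

lemma fTh_prY (a : Lobj X ⟶ X) (b : Lobj Y ⟶ Y) (hab : a ≫ h = LF.map h ≫ b) :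
    fTh h a b hab ≫ (prY h).toNatTrans = fT Y b := by
  apply NatTrans.ext
  funext A
  apply ghom_ext
  · intro U; rfl
  · intro U; rfl

end Comma

end Scratch

namespace Scratch

open CategoryTheory

lemma ed_congr {X Y : Gra} {f g : X ⟶ Y} (h : f = g) (e) : ed f e = ed g e := by rw [h]
lemma vt_congr {X Y : Gra} {f g : X ⟶ Y} (h : f = g) (v) : vt f v = vt g v := by rw [h]

lemma ed_congr2 {F G : Gra ⥤ Gra} {α β : F ⟶ G} (h : α = β) (A : Gra) (e) :
    ed (α.app A) e = ed (β.app A) e := by rw [h]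
lemma vt_congr2 {F G : Gra ⥤ Gra} {α β : F ⟶ G} (h : α = β) (A : Gra) (v) :
    vt (α.app A) v = vt (β.app A) v := by rw [h]

section NoFree

variable (Q : CategoryTheory.Monad Gra) (lam : LF ⟶ Q.toFunctor)

/-- the canonical L-algebra structure on Q ∅ -/
def aZ : Lobj (Q.obj emptyG) ⟶ Q.obj emptyG :=
  lam.app (Q.obj emptyG) ≫ Q.μ.app emptyG

/-- the canonical monad morphism Q ⟶ T_{Q∅} -/
def ghatApp (A : Gra) : Q.obj A ⟶ Tobj (Q.obj emptyG) A :=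
  mkHom
    (fun (e : Ed (Q.obj A)) (k : A ⟶ Q.obj emptyG) =>
      ed (Q.μ.app emptyG) (ed (Q.map k) e))
    (fun (v : Vt (Q.obj A)) k => vt (Q.μ.app emptyG) (vt (Q.map k) v))
    (fun e => funext fun k => by
      show vt (Q.μ.app emptyG) (vt (Q.map k) (src (Q.obj A) e)) = _
      rw [vt_src (Q.map k)]
      exact vt_src (Q.μ.app emptyG) _)
    (fun e => funext fun k => by
      show vt (Q.μ.app emptyG) (vt (Q.map k) (tgt (Q.obj A) e)) = _
      rw [vt_tgt (Q.map k)]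
      exact vt_tgt (Q.μ.app emptyG) _)

lemma ghatApp_evT {A : Gra} (k : A ⟶ Q.obj emptyG) :
    ghatApp Q A ≫ evT (Q.obj emptyG) k = Q.map k ≫ Q.μ.app emptyG := by
  apply ghom_ext
  · intro e; rfl
  · intro v; rfl

def ghat : Q ⟶ TXmon (Q.obj emptyG) where
  toNatTrans :=
    { app := ghatApp Q
      naturality := fun A B φ => by
        apply ghom_ext
        · intro e; funext k
          show ed (Q.μ.app emptyG) (ed (Q.map k) (ed (Q.map φ) e))
            = ed (Q.μ.app emptyG) (ed (Q.map (φ ≫ k)) e)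
          exact congrArg (ed (Q.μ.app emptyG)) (ed_congr (Q.map_comp φ k).symm e)
        · intro v; funext k
          show vt (Q.μ.app emptyG) (vt (Q.map k) (vt (Q.map φ) v))
            = vt (Q.μ.app emptyG) (vt (Q.map (φ ≫ k)) v)
          exact congrArg (vt (Q.μ.app emptyG)) (vt_congr (Q.map_comp φ k).symm v) }
  app_η A := by
    apply ghom_ext
    · intro e; funext k
      show ed (Q.μ.app emptyG) (ed (Q.map k) (ed (Q.η.app A) e)) = ed k e
      rw [← ed_nat Q.η k e]
      exact ed_left_unit Q emptyG _
    · intro v; funext k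
      show vt (Q.μ.app emptyG) (vt (Q.map k) (vt (Q.η.app A) v)) = vt k v
      rw [← vt_nat Q.η k v]
      exact vt_left_unit Q emptyG _
  app_μ A := by
    apply ghom_ext
    · intro u; funext k
      show ed (Q.μ.app emptyG) (ed (Q.map k) (ed (Q.μ.app A) u))
        = ed (ghatApp Q (Tobj (Q.obj emptyG) A)) (ed (Q.map (ghatApp Q A)) u) (evT _ k)
      have s1 : ed (Q.map k) (ed (Q.μ.app A) u)
          = ed (Q.μ.app (Q.obj emptyG)) (ed (Q.map (Q.map k)) u) := (ed_nat Q.μ k u).symm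
      have s2 : ed (Q.μ.app emptyG) (ed (Q.μ.app (Q.obj emptyG)) (ed (Q.map (Q.map k)) u))
          = ed (Q.μ.app emptyG) (ed (Q.map (Q.μ.app emptyG)) (ed (Q.map (Q.map k)) u)) :=
        (types_congr_hom (congrArg (fun m => NatTrans.app m WalkingParallelPair.zero)
          (Q.assoc emptyG)) _).symm
      rw [s1, s2]
      show _ = ed (Q.μ.app emptyG)
        (ed (Q.map (evT (Q.obj emptyG) k)) (ed (Q.map (ghatApp Q A)) u))
      have s3 : ed (Q.map (evT (Q.obj emptyG) k)) (ed (Q.map (ghatApp Q A)) u)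
          = ed (Q.map (ghatApp Q A ≫ evT (Q.obj emptyG) k)) u :=
        (ed_congr (Q.map_comp _ _) u).symm
      rw [s3, ghatApp_evT]
      exact congrArg (ed (Q.μ.app emptyG)) (ed_congr (Q.map_comp (Q.map k) (Q.μ.app emptyG)) u).symm
    · intro u; funext k
      show vt (Q.μ.app emptyG) (vt (Q.map k) (vt (Q.μ.app A) u))
        = vt (ghatApp Q (Tobj (Q.obj emptyG) A)) (vt (Q.map (ghatApp Q A)) u) (evT _ k)
      have s1 : vt (Q.map k) (vt (Q.μ.app A) u)
          = vt (Q.μ.app (Q.obj emptyG)) (vt (Q.map (Q.map k)) u) := (vt_nat Q.μ k u).symm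
      have s2 : vt (Q.μ.app emptyG) (vt (Q.μ.app (Q.obj emptyG)) (vt (Q.map (Q.map k)) u))
          = vt (Q.μ.app emptyG) (vt (Q.map (Q.μ.app emptyG)) (vt (Q.map (Q.map k)) u)) :=
        (types_congr_hom (congrArg (fun m => NatTrans.app m WalkingParallelPair.one)
          (Q.assoc emptyG)) _).symm
      rw [s1, s2]
      show _ = vt (Q.μ.app emptyG)
        (vt (Q.map (evT (Q.obj emptyG) k)) (vt (Q.map (ghatApp Q A)) u))
      have s3 : vt (Q.map (evT (Q.obj emptyG) k)) (vt (Q.map (ghatApp Q A)) u)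
          = vt (Q.map (ghatApp Q A ≫ evT (Q.obj emptyG) k)) u :=
        (vt_congr (Q.map_comp _ _) u).symm
      rw [s3, ghatApp_evT]
      exact congrArg (vt (Q.μ.app emptyG)) (vt_congr (Q.map_comp (Q.map k) (Q.μ.app emptyG)) u).symm

lemma ghat_ext : lam ≫ (monadToFunctor Gra).map (ghat Q) = fT (Q.obj emptyG) (aZ Q lam) := by
  apply NatTrans.ext
  funext A
  apply ghom_ext
  · intro U; funext k
    show ed (Q.μ.app emptyG) (ed (Q.map k) (ed (lam.app A) U))
      = ed (aZ Q lam) (lmap k '' U)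
    rw [← ed_nat lam k U]
    rfl
  · intro U; funext k
    show vt (Q.μ.app emptyG) (vt (Q.map k) (vt (lam.app A) U))
      = vt (aZ Q lam) (lmap k '' U)
    rw [← vt_nat lam k U]
    rfl

variable (hU : ∀ (M : CategoryTheory.Monad Gra) (f : LF ⟶ M.toFunctor),
    ∃! g : Q ⟶ M, lam ≫ (monadToFunctor Gra).map g = f)

noncomputable def gA (X : Gra) (a : Lobj X ⟶ X) : Q ⟶ TXmon X :=
  (hU (TXmon X) (fT X a)).exists.choose

lemma gA_spec (X : Gra) (a : Lobj X ⟶ X) :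
    lam ≫ (monadToFunctor Gra).map (gA Q lam hU X a) = fT X a :=
  (hU (TXmon X) (fT X a)).exists.choose_spec

lemma gA_unique (X : Gra) (a : Lobj X ⟶ X) (g' : Q ⟶ TXmon X)
    (hg' : lam ≫ (monadToFunctor Gra).map g' = fT X a) : g' = gA Q lam hU X a := by
  have h1 := (hU (TXmon X) (fT X a)).unique hg' (gA_spec Q lam hU X a)
  exact h1

/-- the canonical map Q ∅ ⟶ X induced by an algebra -/
noncomputable def eA (X : Gra) (a : Lobj X ⟶ X) : Q.obj emptyG ⟶ X :=
  (gA Q lam hU X a).app emptyG ≫ evT X (toE X)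

lemma ghat_is_gA : ghat Q = gA Q lam hU (Q.obj emptyG) (aZ Q lam) :=
  gA_unique Q lam hU _ _ _ (ghat_ext Q lam)

lemma eA_aZ : eA Q lam hU (Q.obj emptyG) (aZ Q lam) = 𝟙 (Q.obj emptyG) := by
  have htoE : toE (Q.obj emptyG) = Q.η.app emptyG := toE_unique _ _
  apply ghom_ext
  · intro e
    show ed ((gA Q lam hU (Q.obj emptyG) (aZ Q lam)).app emptyG) e (toE (Q.obj emptyG)) = e
    rw [← ghat_is_gA]
    show ed (Q.μ.app emptyG) (ed (Q.map (toE (Q.obj emptyG))) e) = e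
    rw [htoE]
    exact ed_right_unit Q emptyG e
  · intro v
    show vt ((gA Q lam hU (Q.obj emptyG) (aZ Q lam)).app emptyG) v (toE (Q.obj emptyG)) = v
    rw [← ghat_is_gA]
    show vt (Q.μ.app emptyG) (vt (Q.map (toE (Q.obj emptyG))) v) = v
    rw [htoE]
    exact vt_right_unit Q emptyG v

/-- e_a is an algebra morphism -/
lemma eA_alg (X : Gra) (a : Lobj X ⟶ X) :
    aZ Q lam ≫ eA Q lam hU X a = LF.map (eA Q lam hU X a) ≫ a := by
  set ga := gA Q lam hU X a with hga
  have hext := gA_spec Q lam hU X a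
  apply ghom_ext
  · intro U
    show ed (ga.app emptyG) (ed (Q.μ.app emptyG) (ed (lam.app (Q.obj emptyG)) U)) (toE X)
      = ed a (lmap (eA Q lam hU X a) '' U)
    have s1 : ed (ga.app emptyG) (ed (Q.μ.app emptyG) (ed (lam.app (Q.obj emptyG)) U))
        = ed (TXmu X emptyG) (ed (ga.app (Tobj X emptyG))
            (ed (Q.map (ga.app emptyG)) (ed (lam.app (Q.obj emptyG)) U))) :=
      types_congr_hom (congrArg (fun m => NatTrans.app m WalkingParallelPair.zero)
        (ga.app_μ emptyG)) (ed (lam.app (Q.obj emptyG)) U)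
    rw [s1]
    show ed (ga.app (Tobj X emptyG))
      (ed (Q.map (ga.app emptyG)) (ed (lam.app (Q.obj emptyG)) U)) (evT X (toE X)) = _
    erw [← ed_nat lam (ga.app emptyG) U]
    have s4 : ed (ga.app (Tobj X emptyG))
        (ed (lam.app ((TXmon X).obj emptyG)) (ed (LF.map (ga.app emptyG)) U))
        = ed ((fT X a).app (Tobj X emptyG)) (ed (LF.map (ga.app emptyG)) U) :=
      types_congr_hom (congrArg (fun (m : LF ⟶ (TXmon X).toFunctor) =>
        (m.app (Tobj X emptyG)).app WalkingParallelPair.zero) hext)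
        (ed (LF.map (ga.app emptyG)) U)
    erw [s4]
    show ed a (lmap (evT X (toE X)) '' (lmap (ga.app emptyG) '' U)) = _
    erw [← Set.image_comp, ← lmap_comp]
    rfl
  · intro U
    show vt (ga.app emptyG) (vt (Q.μ.app emptyG) (vt (lam.app (Q.obj emptyG)) U)) (toE X)
      = vt a (lmap (eA Q lam hU X a) '' U)
    have s1 : vt (ga.app emptyG) (vt (Q.μ.app emptyG) (vt (lam.app (Q.obj emptyG)) U))
        = vt (TXmu X emptyG) (vt (ga.app (Tobj X emptyG))
            (vt (Q.map (ga.app emptyG)) (vt (lam.app (Q.obj emptyG)) U))) :=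
      types_congr_hom (congrArg (fun m => NatTrans.app m WalkingParallelPair.one)
        (ga.app_μ emptyG)) (vt (lam.app (Q.obj emptyG)) U)
    rw [s1]
    show vt (ga.app (Tobj X emptyG))
      (vt (Q.map (ga.app emptyG)) (vt (lam.app (Q.obj emptyG)) U)) (evT X (toE X)) = _
    erw [← vt_nat lam (ga.app emptyG) U]
    have s4 : vt (ga.app (Tobj X emptyG))
        (vt (lam.app ((TXmon X).obj emptyG)) (vt (LF.map (ga.app emptyG)) U))
        = vt ((fT X a).app (Tobj X emptyG)) (vt (LF.map (ga.app emptyG)) U) :=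
      types_congr_hom (congrArg (fun (m : LF ⟶ (TXmon X).toFunctor) =>
        (m.app (Tobj X emptyG)).app WalkingParallelPair.one) hext)
        (vt (LF.map (ga.app emptyG)) U)
    erw [s4]
    show vt a (lmap (evT X (toE X)) '' (lmap (ga.app emptyG) '' U)) = _
    erw [← Set.image_comp, ← lmap_comp]
    rfl

/-- uniqueness of algebra morphisms out of (Q ∅, aZ) -/
lemma eA_unique (X : Gra) (a : Lobj X ⟶ X) (h : Q.obj emptyG ⟶ X)
    (hab : aZ Q lam ≫ h = LF.map h ≫ a) : h = eA Q lam hU X a := by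
  obtain ⟨gh, hgh, -⟩ := hU (Thmon h) (fTh h (aZ Q lam) a hab)
  have h1 : gh ≫ prX h = gA Q lam hU (Q.obj emptyG) (aZ Q lam) := by
    apply gA_unique
    erw [Functor.map_comp, ← Category.assoc, hgh]
    exact fTh_prX h (aZ Q lam) a hab
  have h2 : gh ≫ prY h = gA Q lam hU X a := by
    apply gA_unique
    erw [Functor.map_comp, ← Category.assoc, hgh]
    exact fTh_prY h (aZ Q lam) a hab
  have htoE : toE (Q.obj emptyG) ≫ h = toE X := toE_unique _ _
  apply ghom_ext
  · intro e
    have e1 : (ed (gh.app emptyG) e).1.1 (toE (Q.obj emptyG)) = e :=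
      (congrFun (congrArg (fun (m : Q ⟶ TXmon (Q.obj emptyG)) =>
        ed (m.app emptyG) e) h1) (toE (Q.obj emptyG))).trans
        (ed_congr (eA_aZ Q lam hU) e)
    have e2 : (ed (gh.app emptyG) e).1.2 (toE X) = ed (eA Q lam hU X a) e :=
      congrFun (congrArg (fun (m : Q ⟶ TXmon X) => ed (m.app emptyG) e) h2) (toE X)
    calc ed h e = ed h ((ed (gh.app emptyG) e).1.1 (toE (Q.obj emptyG))) := by rw [e1]
      _ = (ed (gh.app emptyG) e).1.2 (toE (Q.obj emptyG) ≫ h) :=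
          (ed (gh.app emptyG) e).2 (toE (Q.obj emptyG))
      _ = (ed (gh.app emptyG) e).1.2 (toE X) := by rw [htoE]
      _ = ed (eA Q lam hU X a) e := e2
  · intro v
    have e1 : (vt (gh.app emptyG) v).1.1 (toE (Q.obj emptyG)) = v :=
      (congrFun (congrArg (fun (m : Q ⟶ TXmon (Q.obj emptyG)) =>
        vt (m.app emptyG) v) h1) (toE (Q.obj emptyG))).trans
        (vt_congr (eA_aZ Q lam hU) v)
    have e2 : (vt (gh.app emptyG) v).1.2 (toE X) = vt (eA Q lam hU X a) v :=
      congrFun (congrArg (fun (m : Q ⟶ TXmon X) => vt (m.app emptyG) v) h2) (toE X)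
    calc vt h v = vt h ((vt (gh.app emptyG) v).1.1 (toE (Q.obj emptyG))) := by rw [e1]
      _ = (vt (gh.app emptyG) v).1.2 (toE (Q.obj emptyG) ≫ h) :=
          (vt (gh.app emptyG) v).2 (toE (Q.obj emptyG))
      _ = (vt (gh.app emptyG) v).1.2 (toE X) := by rw [htoE]
      _ = vt (eA Q lam hU X a) v := e2

end NoFree

lemma no_free_L (Q : CategoryTheory.Monad Gra) : ¬ IsFreeMonadOn LF Q := by
  rintro ⟨lam, hU⟩
  set I := Q.obj emptyG
  set a0 := aZ Q lam with ha0
  set e' := eA Q lam hU (Lobj I) (LF.map a0) with he'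
  have halg : a0 ≫ e' = LF.map e' ≫ LF.map a0 := eA_alg Q lam hU (Lobj I) (LF.map a0)
  have hcomp : a0 ≫ (e' ≫ a0) = LF.map (e' ≫ a0) ≫ a0 := by
    rw [← Category.assoc, halg, ← LF.map_comp]; rfl
  have hid : e' ≫ a0 = 𝟙 I := by
    rw [eA_unique Q lam hU I a0 (e' ≫ a0) hcomp]
    exact eA_aZ Q lam hU
  have hinv : a0 ≫ e' = 𝟙 (Lobj I) := by
    rw [halg, ← LF.map_comp, hid]
    exact LF.map_id I
  -- Cantor
  have hsurj : Function.Surjective (fun (l : Lp I) => (ed e' l.1 : Set (Lp I))) := by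
    intro U
    have hloop : src I (ed a0 U) = tgt I (ed a0 U) := by
      rw [← vt_src a0 U, ← vt_tgt a0 U]
      rfl
    refine ⟨⟨ed a0 U, hloop⟩, ?_⟩
    show ed e' (ed a0 U) = U
    exact ed_congr hinv U
  exact Function.cantor_surjective _ hsurj

end Scratch


/-- `Monad Gra` does not have all coequalizers: there is a parallel pair of monad
morphisms between free monads whose coequalizer does not exist. -/
theorem stmt13 :
    ∃ (H K : Gra ⥤ Gra) (FH FK : Monad Gra)
      (_ : IsFreeMonadOn H FH) (_ : IsFreeMonadOn K FK)
      (p q : FH ⟶ FK), ¬ HasColimit (parallelPair p q) := by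
  refine ⟨Scratch.HF, Scratch.KF, Scratch.FHmon, Scratch.FKmon, Scratch.freeH, Scratch.freeK,
    Scratch.pq false, Scratch.pq true, ?_⟩
  intro hcol
  exact Scratch.no_free_L Scratch.Qmon Scratch.Q_free
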